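/- Fix positive integers m, n, p, a real δ ∈ (0,1), vectors L, U ∈ ℝ^p with nonnegative entries, a utility vector w ∈ ℝ^m with w_i ≥ 0, and a matrix q ∈ [0,1]^{m×p} whose rows sum to 1. Let g : {1,…,m} → {1,…,p} be a random group assignment with independent labels and Pr[g(i) = ℓ] = q_{iℓ}. Let P := {x ∈ [0,1]^m : ∑_i x_i = n, and for all ℓ, L_ℓ − δn ≤ ∑_i q_{iℓ} x_i ≤ U_ℓ + δn}, suppose x ∈ P maximizes y ↦ ∑_i w_i y_i over P and has at most p fractional coordinates, and set x'_i := ⌈x_i⌉ ∈ {0,1}. Then n ≤ ∑_i x'_i ≤ n + p, and for every fixed x* ∈ {0,1}^m with ∑_i x*_i = n, with probability at least 1 − 4p·exp(−δ²n/3) over g, the following both hold: (i) if for all ℓ, L_ℓ ≤ #{i : x*_i = 1 and g(i) = ℓ} ≤ U_ℓ, then ∑_i w_i x'_i ≥ ∑_i w_i x*_i; and (ii) for all ℓ, L_ℓ − (p + 2δn) ≤ #{i : x'_i = 1 and g(i) = ℓ} ≤ U_ℓ + (p + 2δn). -/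

import Mathlib

open MeasureTheory

section Stmt8Aux

open Real Finset


variable {m p : ℕ}

lemma pi_singleton (ν : Fin m → Measure (Fin p)) [∀ i, IsProbabilityMeasure (ν i)]
    (g : Fin m → Fin p) :
    Measure.pi ν {g} = ∏ i, ν i {g i} := by
  have h : ({g} : Set (Fin m → Fin p)) = Set.pi Set.univ (fun i => {g i}) := by
    ext h; simp [Set.mem_pi, funext_iff, eq_comm]
  rw [h, Measure.pi_pi]

lemma pi_measure_finset (q : Fin m → Fin p → ℝ) (hq : ∀ i ℓ, q i ℓ ∈ Set.Icc (0:ℝ) 1)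
    (ν : Fin m → Measure (Fin p)) [∀ i, IsProbabilityMeasure (ν i)]
    (hνq : ∀ i ℓ, ν i {ℓ} = ENNReal.ofReal (q i ℓ))
    (F : Finset (Fin m → Fin p)) :
    Measure.pi ν ↑F = ENNReal.ofReal (∑ g ∈ F, ∏ i, q i (g i)) := by
  classical
  have hA2 : (↑F : Set (Fin m → Fin p)) = ⋃ g ∈ F, ({g} : Set (Fin m → Fin p)) := by
    ext y; simp
  have h1 : Set.PairwiseDisjoint (↑F) (fun g => ({g} : Set (Fin m → Fin p))) :=
    fun a _ b _ hab => Set.disjoint_singleton.mpr hab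
  calc Measure.pi ν ↑F
      = ∑ g ∈ F, Measure.pi ν {g} := by
        rw [hA2]
        exact measure_biUnion_finset h1 (fun g _ => measurableSet_singleton g)
    _ = ∑ g ∈ F, ENNReal.ofReal (∏ i, q i (g i)) := by
        refine Finset.sum_congr rfl fun g _ => ?_
        rw [pi_singleton, ENNReal.ofReal_prod_of_nonneg (fun i _ => (hq i (g i)).1)]
        exact Finset.prod_congr rfl fun i _ => hνq i (g i)
    _ = ENNReal.ofReal (∑ g ∈ F, ∏ i, q i (g i)) :=
        (ENNReal.ofReal_sum_of_nonneg
          (fun g _ => Finset.prod_nonneg (fun i _ => (hq i (g i)).1))).symm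


variable {m p : ℕ}

lemma factor_sum (q : Fin m → Fin p → ℝ) (hqsum : ∀ i, ∑ ℓ, q i ℓ = 1)
    (T : Finset (Fin m)) (ℓ : Fin p) (t : ℝ) :
    ∑ g : Fin m → Fin p, (∏ i, q i (g i)) *
        Real.exp (t * ∑ i ∈ T, (if g i = ℓ then (1:ℝ) else 0))
      = ∏ i ∈ T, (1 + q i ℓ * (Real.exp t - 1)) := by
  classical
  have step1 : ∀ g : Fin m → Fin p,
      (∏ i, q i (g i)) * Real.exp (t * ∑ i ∈ T, (if g i = ℓ then (1:ℝ) else 0))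
      = ∏ i, (q i (g i) * (if i ∈ T then (if g i = ℓ then Real.exp t else 1) else 1)) := by
    intro g
    rw [Finset.mul_sum, Real.exp_sum, Finset.prod_mul_distrib]
    congr 1
    rw [← Finset.univ_inter T, ← Finset.prod_ite_mem]
    refine Finset.prod_congr rfl fun i _ => ?_
    by_cases hiT : i ∈ T <;> by_cases hgl : g i = ℓ <;>
      simp [hiT, hgl, Real.exp_zero]
  rw [Finset.sum_congr rfl fun g _ => step1 g]
  rw [← Fintype.piFinset_univ, ← Finset.prod_univ_sum (fun _ => (Finset.univ : Finset (Fin p)))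
    (fun i j => q i j * if i ∈ T then if j = ℓ then Real.exp t else 1 else 1)]
  have inner : ∀ i : Fin m,
      (∑ j, q i j * (if i ∈ T then (if j = ℓ then Real.exp t else 1) else 1))
      = (if i ∈ T then 1 + q i ℓ * (Real.exp t - 1) else 1) := by
    intro i
    by_cases hiT : i ∈ T
    · simp only [hiT, if_true]
      have : ∀ j : Fin p, q i j * (if j = ℓ then Real.exp t else 1)
          = q i j + (if j = ℓ then q i j * (Real.exp t - 1) else 0) := by
        intro j; by_cases hj : j = ℓ <;> simp [hj] <;> ring
      rw [Finset.sum_congr rfl fun j _ => this j, Finset.sum_add_distrib, hqsum i,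
        Finset.sum_ite_eq' Finset.univ ℓ (fun j => q i j * (Real.exp t - 1))]
      simp
    · simp only [hiT, if_false, mul_one]
      exact hqsum i
  rw [Finset.prod_congr rfl fun i _ => inner i, ← Finset.univ_inter T,
    ← Finset.prod_ite_mem]
  simp


lemma key_exp_cube {t : ℝ} (h0 : 0 ≤ t) (h1 : t ≤ 1) :
    Real.exp t ≤ 1 + t + t^2/2 + 2/9*t^3 := by
  have hb := Real.exp_bound (x := t) (by rwa [abs_of_nonneg h0]) (n := 3) (by norm_num)
  rw [abs_of_nonneg h0] at hb
  have hb1 := (abs_le.mp hb).2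
  simp [Finset.sum_range_succ, Nat.factorial] at hb1
  nlinarith [hb1]

/-- per-unit upper-tail exponent bound -/
lemma key_upper {δ : ℝ} (h0 : 0 < δ) (h1 : δ ≤ 1) :
    Real.exp (3*δ/(3+δ)) - 1 - (3*δ/(3+δ)) - (3*δ/(3+δ))*δ + δ^2/3 ≤ 0 := by
  set t : ℝ := 3*δ/(3+δ) with htdef
  have h3 : (0:ℝ) < 3 + δ := by linarith
  have e1 : t * (3+δ) = 3*δ := div_mul_cancel₀ _ (ne_of_gt h3)
  have ht0 : 0 ≤ t := by positivity
  have ht1 : t ≤ 1 := by rw [htdef, div_le_one h3]; linarith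
  have hE := key_exp_cube ht0 ht1
  have e2 : t^2 * (3+δ)^2 = 9*δ^2 := by
    have : (t * (3+δ))^2 = (3*δ)^2 := by rw [e1]
    nlinarith [this]
  have e3 : t^3 * (3+δ)^3 = 27*δ^3 := by
    have : (t * (3+δ))^3 = (3*δ)^3 := by rw [e1]
    nlinarith [this]
  have expand : (t*δ - t^2/2 - 2/9*t^3 - δ^2/3) * (3+δ)^3
      = 3*δ^2*(3+δ)^2 - 9/2*δ^2*(3+δ) - 6*δ^3 - δ^2*(3+δ)^3/3 := by
    linear_combination (δ*(3+δ)^2) * e1 - ((3+δ)/2) * e2 - (2/9) * e3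
  have hδ3 : δ^3 ≤ 1 := by nlinarith
  have hpos : 0 ≤ 3*δ^2*(3+δ)^2 - 9/2*δ^2*(3+δ) - 6*δ^3 - δ^2*(3+δ)^3/3 := by
    nlinarith [sq_nonneg δ, hδ3]
  have h3p : (0:ℝ) < (3+δ)^3 := by positivity
  have key : 0 ≤ t*δ - t^2/2 - 2/9*t^3 - δ^2/3 := by nlinarith [expand, hpos, h3p]
  linarith

lemma key_lower {δ : ℝ} (h0 : 0 < δ) (h1 : δ ≤ 1) :
    Real.exp (-δ) - 1 + δ - 2/3*δ^2 ≤ 0 := by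
  have hb := Real.exp_bound (x := -δ) (by rw [abs_neg, abs_of_nonneg h0.le]; exact h1) (n := 4) (by norm_num)
  rw [abs_neg, abs_of_nonneg h0.le] at hb
  have hb1 := (abs_le.mp hb).2
  simp [Finset.sum_range_succ, Nat.factorial] at hb1
  nlinarith [hb1, sq_nonneg δ, sq_nonneg (δ^2)]


variable {m p : ℕ}

section chernoff

variable (q : Fin m → Fin p → ℝ) (ν : Fin m → Measure (Fin p))
  [∀ i, IsProbabilityMeasure (ν i)]

/-- Generic exponential-moment tail bound on the finite product space. -/
lemma tail_le (hq : ∀ i ℓ, q i ℓ ∈ Set.Icc (0:ℝ) 1) (hqsum : ∀ i, ∑ ℓ, q i ℓ = 1)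
    (hνq : ∀ i ℓ, ν i {ℓ} = ENNReal.ofReal (q i ℓ))
    (T : Finset (Fin m)) (ℓ : Fin p) (t c B : ℝ)
    (A : Set (Fin m → Fin p))
    (hA : ∀ g ∈ A, 1 ≤ Real.exp (t * ((∑ i ∈ T, (if g i = ℓ then (1:ℝ) else 0)) - c)))
    (hB : Real.exp (-(t*c)) * ∏ i ∈ T, (1 + q i ℓ * (Real.exp t - 1)) ≤ B) :
    Measure.pi ν A ≤ ENNReal.ofReal B := by
  classical
  obtain ⟨F, hF⟩ : ∃ F : Finset (Fin m → Fin p), A = ↑F :=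
    ⟨(Set.toFinite A).toFinset, ((Set.toFinite A).coe_toFinset).symm⟩
  subst hF
  rw [pi_measure_finset q hq ν hνq F]
  apply ENNReal.ofReal_le_ofReal
  set S : (Fin m → Fin p) → ℝ := fun g => ∑ i ∈ T, (if g i = ℓ then (1:ℝ) else 0) with hS
  have hWnn : ∀ g : Fin m → Fin p, 0 ≤ ∏ i, q i (g i) :=
    fun g => Finset.prod_nonneg fun i _ => (hq i (g i)).1
  calc ∑ g ∈ F, ∏ i, q i (g i)
      ≤ ∑ g ∈ F, (∏ i, q i (g i)) * Real.exp (t * (S g - c)) := by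
        refine Finset.sum_le_sum fun g hg => ?_
        have := hA g (by exact_mod_cast hg)
        nlinarith [hWnn g, this]
    _ ≤ ∑ g : Fin m → Fin p, (∏ i, q i (g i)) * Real.exp (t * (S g - c)) := by
        refine Finset.sum_le_sum_of_subset_of_nonneg (Finset.subset_univ F)
          (fun g _ _ => mul_nonneg (hWnn g) (Real.exp_pos _).le)
    _ = Real.exp (-(t*c)) * ∑ g : Fin m → Fin p, (∏ i, q i (g i)) * Real.exp (t * S g) := by
        rw [Finset.mul_sum]
        refine Finset.sum_congr rfl fun g _ => ?_
        rw [show t * (S g - c) = t * S g + -(t*c) by ring, Real.exp_add]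
        ring
    _ = Real.exp (-(t*c)) * ∏ i ∈ T, (1 + q i ℓ * (Real.exp t - 1)) := by
        rw [factor_sum q hqsum T ℓ t]
    _ ≤ B := hB

lemma prod_mgf_le (hq : ∀ i ℓ, q i ℓ ∈ Set.Icc (0:ℝ) 1)
    (T : Finset (Fin m)) (ℓ : Fin p) (t : ℝ) :
    ∏ i ∈ T, (1 + q i ℓ * (Real.exp t - 1))
      ≤ Real.exp ((Real.exp t - 1) * ∑ i ∈ T, q i ℓ) := by
  rw [Finset.mul_sum, Real.exp_sum]
  refine Finset.prod_le_prod (fun i _ => ?_) (fun i _ => ?_)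
  · nlinarith [(hq i ℓ).1, (hq i ℓ).2, Real.exp_pos t]
  · calc 1 + q i ℓ * (Real.exp t - 1) = (Real.exp t - 1) * q i ℓ + 1 := by ring
      _ ≤ Real.exp ((Real.exp t - 1) * q i ℓ) := Real.add_one_le_exp _

end chernoff


variable {m p : ℕ}

lemma chernoff_two_sided (q : Fin m → Fin p → ℝ) (ν : Fin m → Measure (Fin p))
    [∀ i, IsProbabilityMeasure (ν i)]
    (hq : ∀ i ℓ, q i ℓ ∈ Set.Icc (0:ℝ) 1) (hqsum : ∀ i, ∑ ℓ, q i ℓ = 1)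
    (hνq : ∀ i ℓ, ν i {ℓ} = ENNReal.ofReal (q i ℓ))
    (n : ℕ) (δ : ℝ) (h0 : 0 < δ) (h1 : δ ≤ 1)
    (T : Finset (Fin m)) (hT : (T.card : ℝ) ≤ n) (ℓ : Fin p) :
    Measure.pi ν {g | ¬ |(∑ i ∈ T, (if g i = ℓ then (1:ℝ) else 0)) - ∑ i ∈ T, q i ℓ| ≤ δ * n}
      ≤ ENNReal.ofReal (2 * Real.exp (-(δ^2*(n:ℝ))/3)) := by
  classical
  set μT : ℝ := ∑ i ∈ T, q i ℓ with hμT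
  set S : (Fin m → Fin p) → ℝ := fun g => ∑ i ∈ T, (if g i = ℓ then (1:ℝ) else 0) with hSdef
  have hn0 : (0:ℝ) ≤ n := Nat.cast_nonneg n
  have hμ0 : 0 ≤ μT := Finset.sum_nonneg fun i _ => (hq i ℓ).1
  have hμn : μT ≤ n := by
    calc μT ≤ ∑ i ∈ T, (1:ℝ) := Finset.sum_le_sum fun i _ => (hq i ℓ).2
      _ = T.card := by simp
      _ ≤ n := hT
  set E : ℝ := Real.exp (-(δ^2*(n:ℝ))/3) with hE
  have hE0 : 0 ≤ E := (Real.exp_pos _).le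
  -- upper tail
  have hA1 : Measure.pi ν {g | μT + δ * n ≤ S g} ≤ ENNReal.ofReal E := by
    set t : ℝ := 3*δ/(3+δ) with htdef
    have h3 : (0:ℝ) < 3 + δ := by linarith
    have ht0 : 0 ≤ t := by positivity
    refine tail_le q ν hq hqsum hνq T ℓ t (μT + δ * n) E _ ?_ ?_
    · intro g hg
      have : μT + δ * n ≤ S g := hg
      refine Real.one_le_exp (mul_nonneg ht0 (by linarith))
    · have hchain : Real.exp (-(t*(μT + δ * n))) * ∏ i ∈ T, (1 + q i ℓ * (Real.exp t - 1))
          ≤ Real.exp (-(t*(μT + δ * n))) * Real.exp ((Real.exp t - 1) * μT) :=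
        mul_le_mul_of_nonneg_left (prod_mgf_le q hq T ℓ t) (Real.exp_pos _).le
      refine hchain.trans ?_
      rw [← Real.exp_add]
      apply Real.exp_le_exp.mpr
      have hup := key_upper h0 h1
      have hge : 0 ≤ Real.exp t - 1 - t := by nlinarith [Real.add_one_le_exp t]
      have h5 : μT * (Real.exp t - 1 - t) ≤ (n:ℝ) * (Real.exp t - 1 - t) :=
        mul_le_mul_of_nonneg_right hμn hge
      have h6 : (n:ℝ) * (Real.exp t - 1 - t) ≤ (n:ℝ) * (t*δ - δ^2/3) :=
        mul_le_mul_of_nonneg_left (by rw [htdef] at *; linarith [hup]) hn0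
      nlinarith [h5, h6]
  -- lower tail
  have hA2 : Measure.pi ν {g | S g ≤ μT - δ * n} ≤ ENNReal.ofReal E := by
    refine tail_le q ν hq hqsum hνq T ℓ (-δ) (μT - δ * n) E _ ?_ ?_
    · intro g hg
      have : S g ≤ μT - δ * n := hg
      refine Real.one_le_exp ?_
      nlinarith [this]
    · have hchain : Real.exp (-((-δ)*(μT - δ * n))) * ∏ i ∈ T, (1 + q i ℓ * (Real.exp (-δ) - 1))
          ≤ Real.exp (-((-δ)*(μT - δ * n))) * Real.exp ((Real.exp (-δ) - 1) * μT) :=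
        mul_le_mul_of_nonneg_left (prod_mgf_le q hq T ℓ (-δ)) (Real.exp_pos _).le
      refine hchain.trans ?_
      rw [← Real.exp_add]
      apply Real.exp_le_exp.mpr
      have hlow := key_lower h0 h1
      have hge : 0 ≤ Real.exp (-δ) - 1 + δ := by nlinarith [Real.add_one_le_exp (-δ)]
      have h5 : μT * (Real.exp (-δ) - 1 + δ) ≤ (n:ℝ) * (Real.exp (-δ) - 1 + δ) :=
        mul_le_mul_of_nonneg_right hμn hge
      have h6 : (n:ℝ) * (Real.exp (-δ) - 1 + δ) ≤ (n:ℝ) * (2/3*δ^2) :=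
        mul_le_mul_of_nonneg_left (by linarith [hlow]) hn0
      nlinarith [h5, h6]
  have hsplit : {g : Fin m → Fin p | ¬ |S g - μT| ≤ δ * n}
      ⊆ {g | μT + δ * n ≤ S g} ∪ {g | S g ≤ μT - δ * n} := by
    intro g hg
    simp only [Set.mem_setOf_eq, not_le] at hg
    rcases lt_abs.mp hg with h | h
    · exact Or.inl (by simp only [Set.mem_setOf_eq]; linarith)
    · exact Or.inr (by simp only [Set.mem_setOf_eq]; linarith)
  calc Measure.pi ν {g | ¬ |S g - μT| ≤ δ * n}
      ≤ Measure.pi ν ({g | μT + δ * n ≤ S g} ∪ {g | S g ≤ μT - δ * n}) :=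
        measure_mono hsplit
    _ ≤ Measure.pi ν {g | μT + δ * n ≤ S g} + Measure.pi ν {g | S g ≤ μT - δ * n} :=
        measure_union_le _ _
    _ ≤ ENNReal.ofReal E + ENNReal.ofReal E := add_le_add hA1 hA2
    _ = ENNReal.ofReal (2 * E) := by rw [← ENNReal.ofReal_add hE0 hE0]; ring_nf


lemma ncard_filter_eq {m p : ℕ} (P : Fin m → Prop) [DecidablePred P]
    (g : Fin m → Fin p) (ℓ : Fin p) :
    (({i | P i ∧ g i = ℓ} : Set (Fin m)).ncard : ℝ)
      = ∑ i ∈ Finset.univ.filter P, (if g i = ℓ then (1:ℝ) else 0) := by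
  classical
  have h1 : {i | P i ∧ g i = ℓ}
      = ↑(Finset.univ.filter (fun i => P i ∧ g i = ℓ)) := by ext i; simp
  rw [h1, Set.ncard_coe_finset, Finset.sum_boole, ← Finset.filter_filter]


end Stmt8Aux


/-- **Main guarantee of the approximation algorithm for the Target problem (one protected
attribute).** Rounding up an optimal basic feasible solution `x` of the denoised LP
gives `x'` with `n ≤ ∑ x' ≤ n + p`, and for every fixed Target-feasible candidate `x*`,
with probability at least `1 − 4 p exp (−δ² n / 3)` over the random group assignment `g`:
(i) if `x*` satisfies the Target fairness constraints for `g`, then `x'` has value at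
least that of `x*`; and (ii) `x'` violates each Target fairness constraint by at most
`p + 2 δ n`. -/

theorem stmt8 (m n p : ℕ) (hm : 0 < m) (hn : 0 < n) (hp : 0 < p)
    (δ : ℝ) (hδ : δ ∈ Set.Ioo (0 : ℝ) 1)
    (L U : Fin p → ℝ) (hL : ∀ ℓ, 0 ≤ L ℓ) (hU : ∀ ℓ, 0 ≤ U ℓ)
    (w : Fin m → ℝ) (hw : ∀ i, 0 ≤ w i)
    (q : Fin m → Fin p → ℝ) (hq : ∀ i ℓ, q i ℓ ∈ Set.Icc (0 : ℝ) 1)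
    (hqsum : ∀ i, ∑ ℓ, q i ℓ = 1)
    (ν : Fin m → Measure (Fin p)) [∀ i, IsProbabilityMeasure (ν i)]
    (hνq : ∀ i ℓ, ν i {ℓ} = ENNReal.ofReal (q i ℓ))
    (P : Set (Fin m → ℝ))
    (hP : P = {x | (∀ i, 0 ≤ x i ∧ x i ≤ 1) ∧ (∑ i, x i = (n : ℝ)) ∧
      ∀ ℓ, L ℓ - δ * n ≤ ∑ i, q i ℓ * x i ∧ ∑ i, q i ℓ * x i ≤ U ℓ + δ * n})
    (x : Fin m → ℝ) (hxP : x ∈ P)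
    (hxopt : ∀ y ∈ P, ∑ i, w i * y i ≤ ∑ i, w i * x i)
    (hfrac : {i | 0 < x i ∧ x i < 1}.ncard ≤ p)
    (x' : Fin m → ℝ) (hx' : ∀ i, x' i = (⌈x i⌉ : ℝ))
    (xstar : Fin m → ℝ) (hxstar01 : ∀ i, xstar i = 0 ∨ xstar i = 1)
    (hxstarsum : ∑ i, xstar i = (n : ℝ)) :
    ((n : ℝ) ≤ ∑ i, x' i ∧ ∑ i, x' i ≤ (n : ℝ) + p) ∧
    ENNReal.ofReal (1 - 4 * p * Real.exp (-(δ ^ 2 * n) / 3)) ≤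
      Measure.pi ν {g |
        ((∀ ℓ, L ℓ ≤ (({i | xstar i = 1 ∧ g i = ℓ} : Set (Fin m)).ncard : ℝ) ∧
            (({i | xstar i = 1 ∧ g i = ℓ} : Set (Fin m)).ncard : ℝ) ≤ U ℓ) →
          ∑ i, w i * xstar i ≤ ∑ i, w i * x' i) ∧
        (∀ ℓ, L ℓ - ((p : ℝ) + 2 * δ * n) ≤
            (({i | x' i = 1 ∧ g i = ℓ} : Set (Fin m)).ncard : ℝ) ∧
          (({i | x' i = 1 ∧ g i = ℓ} : Set (Fin m)).ncard : ℝ) ≤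
            U ℓ + ((p : ℝ) + 2 * δ * n))} := by
  classical
  obtain ⟨hδ0, hδ1⟩ := hδ
  have hδ1' : δ ≤ 1 := le_of_lt hδ1
  rw [hP] at hxP
  obtain ⟨hx01, hxsum, hxcons⟩ := hxP
  have hn0 : (0:ℝ) ≤ n := Nat.cast_nonneg n
  -- basic facts about x'
  have hx'eq : ∀ i, x' i = if 0 < x i then 1 else 0 := by
    intro i
    rw [hx' i]
    rcases eq_or_lt_of_le (hx01 i).1 with h | h
    · simp [← h]
    · have hc : ⌈x i⌉ = 1 := by
        rw [Int.ceil_eq_iff]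
        constructor
        · push_cast; linarith
        · push_cast; exact (hx01 i).2
      simp [h, hc]
  have hxlex' : ∀ i, x i ≤ x' i := fun i => by rw [hx' i]; exact Int.le_ceil _
  have hx'le : ∀ i, x' i ≤ x i + (if 0 < x i ∧ x i < 1 then 1 else 0) := by
    intro i
    rw [hx'eq i]
    by_cases h : 0 < x i
    · by_cases h2 : x i < 1
      · simp only [h, h2, and_self, if_true]; linarith
      · have hx1 : x i = 1 := le_antisymm (hx01 i).2 (not_lt.mp h2)
        simp [h, hx1]
    · have hx0 : x i = 0 := le_antisymm (not_lt.mp h) (hx01 i).1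
      simp [h, hx0]
  -- finsets
  set Ff : Finset (Fin m) := Finset.univ.filter (fun i => 0 < x i ∧ x i < 1) with hFf
  set Sf : Finset (Fin m) := Finset.univ.filter (fun i => x i = 1) with hSf
  set Tf : Finset (Fin m) := Finset.univ.filter (fun i => xstar i = 1) with hTf
  have hFcard : (Ff.card : ℝ) ≤ p := by
    have h1 : {i | 0 < x i ∧ x i < 1} = ↑Ff := by ext i; simp [hFf]
    rw [h1, Set.ncard_coe_finset] at hfrac
    exact_mod_cast hfrac
  have hFsum : ∑ i, (if 0 < x i ∧ x i < 1 then (1:ℝ) else 0) = Ff.card := by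
    rw [hFf, Finset.sum_boole]
  -- first bullet
  have hsum1 : (n:ℝ) ≤ ∑ i, x' i := by
    rw [← hxsum]; exact Finset.sum_le_sum fun i _ => hxlex' i
  have hsum2 : ∑ i, x' i ≤ (n:ℝ) + p := by
    calc ∑ i, x' i ≤ ∑ i, (x i + if 0 < x i ∧ x i < 1 then 1 else 0) :=
          Finset.sum_le_sum fun i _ => hx'le i
      _ = (∑ i, x i) + ∑ i, (if 0 < x i ∧ x i < 1 then (1:ℝ) else 0) :=
          Finset.sum_add_distrib
      _ = (n:ℝ) + Ff.card := by rw [hxsum, hFsum]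
      _ ≤ (n:ℝ) + p := by linarith
  refine ⟨⟨hsum1, hsum2⟩, ?_⟩
  -- cardinalities
  have hTcard : (Tf.card : ℝ) = n := by
    calc (Tf.card : ℝ) = ∑ i, (if xstar i = 1 then (1:ℝ) else 0) := by
          rw [hTf, Finset.sum_boole]
      _ = ∑ i, xstar i := by
          refine Finset.sum_congr rfl fun i _ => ?_
          rcases hxstar01 i with h | h <;> simp [h]
      _ = n := hxstarsum
  have hScard : (Sf.card : ℝ) ≤ n := by
    calc (Sf.card : ℝ) = ∑ i, (if x i = 1 then (1:ℝ) else 0) := by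
          rw [hSf, Finset.sum_boole]
      _ ≤ ∑ i, x i := by
          refine Finset.sum_le_sum fun i _ => ?_
          by_cases h : x i = 1
          · simp [h]
          · simp only [h, if_false]
            exact (hx01 i).1
      _ = n := hxsum
  -- means
  set μT : Fin p → ℝ := fun ℓ => ∑ i ∈ Tf, q i ℓ with hμT
  set μS : Fin p → ℝ := fun ℓ => ∑ i ∈ Sf, q i ℓ with hμS
  have hμTeq : ∀ ℓ, μT ℓ = ∑ i, q i ℓ * xstar i := by
    intro ℓ
    simp only [hμT, hTf, Finset.sum_filter]
    refine Finset.sum_congr rfl fun i _ => ?_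
    rcases hxstar01 i with h | h <;> simp [h]
  -- counting functions
  set CT : (Fin m → Fin p) → Fin p → ℝ :=
    fun g ℓ => ∑ i ∈ Tf, (if g i = ℓ then (1:ℝ) else 0) with hCT
  set CS : (Fin m → Fin p) → Fin p → ℝ :=
    fun g ℓ => ∑ i ∈ Sf, (if g i = ℓ then (1:ℝ) else 0) with hCS
  set Good : Set (Fin m → Fin p) :=
    {g | ∀ ℓ, |CT g ℓ - μT ℓ| ≤ δ * n ∧ |CS g ℓ - μS ℓ| ≤ δ * n} with hGood
  have hmeas : ∀ A : Set (Fin m → Fin p), MeasurableSet A :=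
    fun A => A.to_countable.measurableSet
  set E : ℝ := Real.exp (-(δ ^ 2 * n) / 3) with hEdef
  have hE0 : 0 ≤ E := (Real.exp_pos _).le
  -- probability of bad event
  have hbound : Measure.pi ν Goodᶜ ≤ ENNReal.ofReal (4 * p * E) := by
    have hsub : Goodᶜ ⊆ ⋃ ℓ : Fin p,
        ({g | ¬ |CT g ℓ - μT ℓ| ≤ δ * n} ∪ {g | ¬ |CS g ℓ - μS ℓ| ≤ δ * n}) := by
      intro g hg
      simp only [hGood, Set.mem_compl_iff, Set.mem_setOf_eq, not_forall] at hg
      obtain ⟨ℓ, hℓ⟩ := hg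
      refine Set.mem_iUnion.mpr ⟨ℓ, ?_⟩
      rw [not_and_or] at hℓ
      rcases hℓ with h | h
      · exact Or.inl h
      · exact Or.inr h
    calc Measure.pi ν Goodᶜ
        ≤ Measure.pi ν (⋃ ℓ : Fin p,
            ({g | ¬ |CT g ℓ - μT ℓ| ≤ δ * n} ∪ {g | ¬ |CS g ℓ - μS ℓ| ≤ δ * n})) :=
          measure_mono hsub
      _ ≤ ∑' ℓ : Fin p, Measure.pi ν
            ({g | ¬ |CT g ℓ - μT ℓ| ≤ δ * n} ∪ {g | ¬ |CS g ℓ - μS ℓ| ≤ δ * n}) :=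
          measure_iUnion_le _
      _ = ∑ ℓ : Fin p, Measure.pi ν
            ({g | ¬ |CT g ℓ - μT ℓ| ≤ δ * n} ∪ {g | ¬ |CS g ℓ - μS ℓ| ≤ δ * n}) :=
          tsum_fintype _
      _ ≤ ∑ ℓ : Fin p, (ENNReal.ofReal (2 * E) + ENNReal.ofReal (2 * E)) := by
          refine Finset.sum_le_sum fun ℓ _ => ?_
          refine (measure_union_le _ _).trans (add_le_add ?_ ?_)
          · have := chernoff_two_sided q ν hq hqsum hνq n δ hδ0 hδ1' Tf
              (le_of_eq hTcard) ℓ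
            rw [hEdef]
            exact this
          · have := chernoff_two_sided q ν hq hqsum hνq n δ hδ0 hδ1' Sf hScard ℓ
            rw [hEdef]
            exact this
      _ = ENNReal.ofReal (4 * p * E) := by
          rw [Finset.sum_const, Finset.card_univ, Fintype.card_fin,
            ← ENNReal.ofReal_add (by positivity) (by positivity), nsmul_eq_mul,
            ← ENNReal.ofReal_natCast p,
            ← ENNReal.ofReal_mul (Nat.cast_nonneg p)]
          congr 1
          ring
  -- deterministic inclusion
  have hGsub : Good ⊆ {g : Fin m → Fin p |
      ((∀ ℓ, L ℓ ≤ (({i | xstar i = 1 ∧ g i = ℓ} : Set (Fin m)).ncard : ℝ) ∧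
          (({i | xstar i = 1 ∧ g i = ℓ} : Set (Fin m)).ncard : ℝ) ≤ U ℓ) →
        ∑ i, w i * xstar i ≤ ∑ i, w i * x' i) ∧
      (∀ ℓ, L ℓ - ((p : ℝ) + 2 * δ * n) ≤
          (({i | x' i = 1 ∧ g i = ℓ} : Set (Fin m)).ncard : ℝ) ∧
        (({i | x' i = 1 ∧ g i = ℓ} : Set (Fin m)).ncard : ℝ) ≤
          U ℓ + ((p : ℝ) + 2 * δ * n))} := by
    intro g hg
    have hgG : ∀ ℓ, |CT g ℓ - μT ℓ| ≤ δ * n ∧ |CS g ℓ - μS ℓ| ≤ δ * n := hg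
    have hcntT : ∀ ℓ : Fin p,
        (({i | xstar i = 1 ∧ g i = ℓ} : Set (Fin m)).ncard : ℝ) = CT g ℓ := by
      intro ℓ
      simp only [hCT, hTf]
      exact ncard_filter_eq (fun i => xstar i = 1) g ℓ
    constructor
    · -- value guarantee
      intro hfeas
      have hxstarP : xstar ∈ P := by
        rw [hP]
        refine ⟨fun i => by rcases hxstar01 i with h | h <;> simp [h], hxstarsum,
          fun ℓ => ?_⟩
        have habs := abs_le.mp (hgG ℓ).1
        have hf := hfeas ℓ
        rw [hcntT ℓ] at hf
        rw [← hμTeq ℓ]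
        exact ⟨by linarith [hf.1, habs.2], by linarith [hf.2, habs.1]⟩
      have h1 := hxopt xstar hxstarP
      have h2 : ∑ i, w i * x i ≤ ∑ i, w i * x' i :=
        Finset.sum_le_sum fun i _ => mul_le_mul_of_nonneg_left (hxlex' i) (hw i)
      linarith
    · -- fairness violation bound
      intro ℓ
      have hx'filter : Finset.univ.filter (fun i => x' i = 1) = Sf ∪ Ff := by
        ext i
        simp only [Finset.mem_filter, Finset.mem_univ, true_and, Finset.mem_union,
          hSf, hFf]
        rw [hx'eq i]
        by_cases h : 0 < x i
        · rw [if_pos h]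
          constructor
          · intro _
            rcases lt_or_eq_of_le (hx01 i).2 with h2 | h2
            · exact Or.inr ⟨h, h2⟩
            · exact Or.inl h2
          · intro _; rfl
        · rw [if_neg h]
          have hx0 : x i = 0 := le_antisymm (not_lt.mp h) (hx01 i).1
          constructor
          · intro h0; exact absurd h0 (by norm_num)
          · intro hcon
            rcases hcon with h1 | h1
            · exact absurd (hx0.symm.trans h1) (by norm_num)
            · exact absurd h1.1 h
      have hdisj : Disjoint Sf Ff := by
        rw [Finset.disjoint_left]
        intro i h1 h2
        simp only [hSf, hFf, Finset.mem_filter] at h1 h2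
        linarith [h1.2, h2.2.2]
      have hcnt' : (({i | x' i = 1 ∧ g i = ℓ} : Set (Fin m)).ncard : ℝ)
          = CS g ℓ + ∑ i ∈ Ff, (if g i = ℓ then (1:ℝ) else 0) := by
        rw [ncard_filter_eq (fun i => x' i = 1) g ℓ, hx'filter,
          Finset.sum_union hdisj]
      have hFpart0 : 0 ≤ ∑ i ∈ Ff, (if g i = ℓ then (1:ℝ) else 0) :=
        Finset.sum_nonneg fun i _ => by positivity
      have hFpartp : ∑ i ∈ Ff, (if g i = ℓ then (1:ℝ) else 0) ≤ p := by
        calc ∑ i ∈ Ff, (if g i = ℓ then (1:ℝ) else 0) ≤ ∑ i ∈ Ff, (1:ℝ) :=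
              Finset.sum_le_sum fun i _ => by split <;> norm_num
          _ = Ff.card := by simp
          _ ≤ p := hFcard
      have habs := abs_le.mp (hgG ℓ).2
      -- bounds on μS
      have hμSle : μS ℓ ≤ ∑ i, q i ℓ * x i := by
        simp only [hμS, hSf, Finset.sum_filter]
        refine Finset.sum_le_sum fun i _ => ?_
        by_cases h : x i = 1
        · simp [h]
        · simp only [h, if_false]
          exact mul_nonneg (hq i ℓ).1 (hx01 i).1
      have hμSge : ∑ i, q i ℓ * x i ≤ μS ℓ + p := by
        have step : ∑ i, q i ℓ * x i
            ≤ ∑ i, ((if x i = 1 then q i ℓ else 0)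
              + (if 0 < x i ∧ x i < 1 then (1:ℝ) else 0)) := by
          refine Finset.sum_le_sum fun i _ => ?_
          by_cases h1 : x i = 1
          · have : ¬ (0 < x i ∧ x i < 1) := by rw [h1]; intro h; linarith [h.2]
            simp [h1, this]
          · by_cases h2 : 0 < x i
            · have hfr : 0 < x i ∧ x i < 1 :=
                ⟨h2, lt_of_le_of_ne (hx01 i).2 h1⟩
              simp only [h1, if_false, hfr, if_true, zero_add]
              calc q i ℓ * x i ≤ 1 * 1 :=
                    mul_le_mul (hq i ℓ).2 (hx01 i).2 (hx01 i).1 zero_le_one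
                _ = 1 := by norm_num
            · have hx0 : x i = 0 := le_antisymm (not_lt.mp h2) (hx01 i).1
              have : ¬ (0 < x i ∧ x i < 1) := fun h => h2 h.1
              simp [hx0, this]
        rw [Finset.sum_add_distrib] at step
        have e1 : ∑ i, (if x i = 1 then q i ℓ else 0) = μS ℓ := by
          simp only [hμS, hSf, Finset.sum_filter]
        rw [e1, hFsum] at step
        linarith
      have hcons := hxcons ℓ
      rw [hcnt']
      constructor
      · -- lower bound
        have : μS ℓ - δ * n ≤ CS g ℓ := by linarith [habs.2]
        have h3 : L ℓ - δ * n ≤ ∑ i, q i ℓ * x i := hcons.1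
        linarith
      · -- upper bound
        have : CS g ℓ ≤ μS ℓ + δ * n := by linarith [habs.1]
        have h3 : ∑ i, q i ℓ * x i ≤ U ℓ + δ * n := hcons.2
        linarith
  -- final probabilistic assembly
  by_cases hcase : 1 - 4 * p * E ≤ 0
  · rw [hEdef] at hcase
    rw [ENNReal.ofReal_eq_zero.mpr hcase]
    exact zero_le
  · push_neg at hcase
    have hc := measure_add_measure_compl (μ := Measure.pi ν) (hmeas Good)
    rw [measure_univ] at hc
    have h4 : ENNReal.ofReal (1 - 4 * p * E) + Measure.pi ν Goodᶜ
        ≤ ENNReal.ofReal (1 - 4 * p * E) + ENNReal.ofReal (4 * p * E) :=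
      add_le_add le_rfl hbound
    have h5 : ENNReal.ofReal (1 - 4 * p * E) + ENNReal.ofReal (4 * p * E) = 1 := by
      rw [← ENNReal.ofReal_add (le_of_lt hcase) (by positivity)]
      norm_num
    have h6 : ENNReal.ofReal (1 - 4 * p * E) + Measure.pi ν Goodᶜ
        ≤ Measure.pi ν Good + Measure.pi ν Goodᶜ := by
      rw [hc]; rw [h5] at h4; exact h4
    have h7 := (ENNReal.add_le_add_iff_right (measure_ne_top _ _)).mp h6
    rw [hEdef] at h7
    exact h7.trans (measure_mono hGsub)
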